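/- The quotient ring ℤ[ζ]/(1 − ζ)^6, where ζ is a primitive 16th root of unity, is isomorphic as a ring to 𝔽₂[x]/((x − 1)^6). -/

import Mathlib

open scoped NumberField
open Polynomial

set_option synthInstance.maxHeartbeats 1000000
set_option maxHeartbeats 1000000

lemma aux_pow2 : ((X : Polynomial (ZMod 2)) - 1) ^ 8 = X ^ 8 + 1 := by
  have h : (X - 1 : Polynomial (ZMod 2)) = X + 1 := by
    rw [CharTwo.sub_eq_add]
  rw [h, show (8 : ℕ) = 2 ^ 3 from rfl, add_pow_char_pow, one_pow]

/-- The quotient ring ℤ[ζ]/(1 − ζ)⁶, ζ a primitive 16th root of unity, is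
isomorphic as a ring to 𝔽₂[x]/((x − 1)⁶), via an isomorphism sending the
class of ζ to the class of x. -/
theorem stmt_14 (ζ : 𝓞 (CyclotomicField 16 ℚ)) (hζ : IsPrimitiveRoot ζ 16) :
    ∃ e : (𝓞 (CyclotomicField 16 ℚ) ⧸ (Ideal.span {1 - ζ}) ^ 6) ≃+*
        (Polynomial (ZMod 2) ⧸ Ideal.span {(X - 1 : Polynomial (ZMod 2)) ^ 6}),
      e (Ideal.Quotient.mk _ ζ) = Ideal.Quotient.mk _ X := by
  set K := CyclotomicField 16 ℚ with hKdef
  haveI hext : IsCyclotomicExtension {(((2 : ℕ+) ^ 4 : ℕ+) : ℕ)} ℚ K := by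
    have h : ((2 : ℕ+) ^ 4) = 16 := rfl
    rw [h]; exact CyclotomicField.isCyclotomicExtension 16 ℚ
  have hζK : IsPrimitiveRoot (algebraMap (𝓞 K) K ζ) 16 :=
    hζ.map_of_injective NumberField.RingOfIntegers.coe_injective
  have hζ' : IsPrimitiveRoot (algebraMap (𝓞 K) K ζ) (((2 : ℕ+) ^ 4 : ℕ+) : ℕ) := hζK
  set pb := hζ'.integralPowerBasis with hpb
  have hgen : pb.gen = ζ := by
    rw [hpb, hζ'.integralPowerBasis_gen]
    exact Subtype.ext rfl
  have hmin : minpoly ℤ pb.gen = cyclotomic 16 ℤ := by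
    rw [hgen]
    have h1 : minpoly ℤ (algebraMap (𝓞 K) K ζ) = minpoly ℤ ζ :=
      minpoly.algebraMap_eq NumberField.RingOfIntegers.coe_injective ζ
    rw [← h1]; exact (cyclotomic_eq_minpoly hζK (by norm_num)).symm
  set I : Ideal (𝓞 K) := (Ideal.span {1 - ζ}) ^ 6 with hIdef
  set J : Ideal (Polynomial (ZMod 2)) := Ideal.span {(X - 1 : Polynomial (ZMod 2)) ^ 6} with hJdef
  set y : Polynomial (ZMod 2) ⧸ J := Ideal.Quotient.mk J X with hydef
  have h8 : (Ideal.Quotient.mk J) ((X : Polynomial (ZMod 2)) ^ 8 + 1) = 0 := by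
    rw [← aux_pow2, Ideal.Quotient.eq_zero_iff_mem, hJdef, Ideal.mem_span_singleton]
    exact ⟨(X - 1) ^ 2, by ring⟩
  have hy : aeval y (minpoly ℤ pb.gen) = 0 := by
    rw [hmin, aeval_def, eval₂_eq_eval_map, map_cyclotomic,
      show (16 : ℕ) = 2 ^ (3 + 1) from rfl, cyclotomic_prime_pow_eq_geom_sum Nat.prime_two]
    simp only [Finset.sum_range_succ, Finset.sum_range_zero, zero_add, pow_zero, pow_one,
      eval_add, eval_pow, eval_one, eval_X]
    simp only [map_add, map_pow, map_one] at h8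
    rw [show ((2:ℕ)^3 = 8) from rfl]
    rw [add_comm]
    exact h8
  set f₀ : 𝓞 K →ₐ[ℤ] (Polynomial (ZMod 2) ⧸ J) := pb.lift y hy with hf₀def
  have hf₀ζ : f₀ ζ = y := by rw [← hgen]; exact pb.lift_gen y hy
  have hkillI : ∀ a ∈ I, f₀.toRingHom a = 0 := by
    intro a ha
    rw [hIdef, Ideal.span_singleton_pow, Ideal.mem_span_singleton] at ha
    obtain ⟨c, rfl⟩ := ha
    have h6 : ((1 : Polynomial (ZMod 2) ⧸ J) - y) ^ 6 = 0 := by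
      have : ((1 : Polynomial (ZMod 2) ⧸ J) - y) = Ideal.Quotient.mk J (1 - X) := by
        simp [hydef]
      rw [this, ← map_pow, Ideal.Quotient.eq_zero_iff_mem, hJdef, Ideal.mem_span_singleton]
      exact ⟨1, by ring⟩
    show f₀ ((1 - ζ) ^ 6 * c) = 0
    rw [map_mul, map_pow, map_sub, map_one, hf₀ζ, h6, zero_mul]
  set f : (𝓞 K ⧸ I) →+* (Polynomial (ZMod 2) ⧸ J) := Ideal.Quotient.lift I f₀.toRingHom hkillI
    with hfdef
  have hfζ : f (Ideal.Quotient.mk I ζ) = y := by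
    rw [hfdef, Ideal.Quotient.lift_mk]
    exact hf₀ζ
  -- nontriviality of the source
  haveI : Nontrivial (Polynomial (ZMod 2) ⧸ J) := by
    refine Ideal.Quotient.nontrivial_iff.mpr ?_
    rw [hJdef]
    refine (Ideal.span_singleton_ne_top ?_)
    intro hu
    have := Polynomial.natDegree_eq_zero_of_isUnit hu
    have hd1 : (X - 1 : Polynomial (ZMod 2)).natDegree = 1 := by
      simpa using natDegree_X_sub_C (1 : ZMod 2)
    rw [natDegree_pow, hd1] at this
    norm_num at this
  haveI : Nontrivial (𝓞 K ⧸ I) := f.domain_nontrivial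
  -- characteristic 2
  have hdvd2 : (1 - ζ) ^ 6 ∣ (2 : 𝓞 K) := by
    have h2eq : ((2 : ℕ) : 𝓞 K) = eval 1 (cyclotomic (2 ^ (3 + 1)) (𝓞 K)) :=
      (eval_one_cyclotomic_prime_pow 3).symm
    rw [show ((2:ℕ)^(3+1) = 16) from rfl, cyclotomic_eq_prod_X_sub_primitiveRoots hζ,
      eval_prod] at h2eq
    simp only [eval_sub, eval_X, eval_C] at h2eq
    have hcard : (primitiveRoots 16 (𝓞 K)).card = 8 := by
      rw [hζ.card_primitiveRoots]; rfl
    have hstep : (1 - ζ) ^ 8 ∣ ∏ μ ∈ primitiveRoots 16 (𝓞 K), (1 - μ) := by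
      rw [← hcard, ← Finset.prod_const]
      refine Finset.prod_dvd_prod_of_dvd _ _ (fun μ hμ => ?_)
      have hμ' : IsPrimitiveRoot μ 16 := (mem_primitiveRoots (by norm_num)).1 hμ
      obtain ⟨i, _, rfl⟩ := hζ.eq_pow_of_pow_eq_one hμ'.pow_eq_one
      simpa using sub_dvd_pow_sub_pow (1 : 𝓞 K) ζ i
    have h2' : (2 : 𝓞 K) = ∏ μ ∈ primitiveRoots 16 (𝓞 K), (1 - μ) := by
      exact_mod_cast h2eq
    rw [h2']
    exact dvd_trans (pow_dvd_pow _ (by norm_num)) hstep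
  have h2 : (2 : 𝓞 K ⧸ I) = 0 := by
    rw [show ((2 : 𝓞 K ⧸ I)) = Ideal.Quotient.mk I (2 : 𝓞 K) from
      (map_ofNat (Ideal.Quotient.mk I) 2).symm, Ideal.Quotient.eq_zero_iff_mem, hIdef, Ideal.span_singleton_pow,
      Ideal.mem_span_singleton]
    exact hdvd2
  haveI hchar : CharP (𝓞 K ⧸ I) 2 := by
    have hd : ringChar (𝓞 K ⧸ I) ∣ 2 := ringChar.dvd (by exact_mod_cast h2)
    rcases (Nat.dvd_prime Nat.prime_two).1 hd with h | h
    · exact absurd h (CharP.ringChar_ne_one)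
    · rw [← h]; exact ringChar.charP _
  set φ2 : ZMod 2 →+* (𝓞 K ⧸ I) := ZMod.castHom dvd_rfl _ with hφ2def
  set g₀ : Polynomial (ZMod 2) →+* (𝓞 K ⧸ I) := eval₂RingHom φ2 (Ideal.Quotient.mk I ζ)
    with hg₀def
  have hg₀X : g₀ X = Ideal.Quotient.mk I ζ := by simp [hg₀def]
  have hkillJ : ∀ a ∈ J, g₀ a = 0 := by
    intro a ha
    rw [hJdef, Ideal.mem_span_singleton] at ha
    obtain ⟨c, rfl⟩ := ha
    have h6 : (Ideal.Quotient.mk I ζ - 1) ^ 6 = 0 := by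
      have : (Ideal.Quotient.mk I ζ - 1) ^ 6 = Ideal.Quotient.mk I ((ζ - 1) ^ 6) := by
        simp
      rw [this, Ideal.Quotient.eq_zero_iff_mem, hIdef, Ideal.span_singleton_pow,
        Ideal.mem_span_singleton]
      exact ⟨1, by ring⟩
    rw [map_mul, map_pow, map_sub, map_one, hg₀X, h6, zero_mul]
  set g : (Polynomial (ZMod 2) ⧸ J) →+* (𝓞 K ⧸ I) := Ideal.Quotient.lift J g₀ hkillJ with hgdef
  have hgy : g y = Ideal.Quotient.mk I ζ := by
    rw [hydef, hgdef, Ideal.Quotient.lift_mk]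
    exact hg₀X
  have hgf : g.comp f = RingHom.id _ := by
    refine Ideal.Quotient.ringHom_ext ?_
    have key : ((g.comp f).comp (Ideal.Quotient.mk I)).toIntAlgHom
        = ((RingHom.id (𝓞 K ⧸ I)).comp (Ideal.Quotient.mk I)).toIntAlgHom := by
      refine pb.algHom_ext ?_
      rw [hgen]
      show g (f (Ideal.Quotient.mk I ζ)) = Ideal.Quotient.mk I ζ
      rw [hfζ, hgy]
    ext x
    exact DFunLike.congr_fun key x
  have hfg : f.comp g = RingHom.id _ := by
    refine Ideal.Quotient.ringHom_ext ?_
    refine Polynomial.ringHom_ext' (RingHom.ext_zmod _ _) ?_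
    show f (g (Ideal.Quotient.mk J X)) = Ideal.Quotient.mk J X
    rw [← hydef, hgy, hfζ]
  exact ⟨RingEquiv.ofRingHom f g hfg hgf, hfζ⟩
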